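/- (Turnover conservation) If F_j G_{j+1} H_j = M_{j+1} Ĝ_j Ĝ_{j+1} where F_j, H_j, Ĝ_j are 3×3 unitary core transformations acting on rows/columns 1,2 with active parts [c, -s; s, conj(c)] (s real), and G_{j+1}, M_{j+1}, Ĝ_{j+1} act on rows/columns 2,3, then the subdiagonal-parameter product is conserved: letting s_j, s_{j+1} be the s-parameters of F_j and G_{j+1}, and ŝ_j, ŝ_{j+1} those of Ĝ_j and Ĝ_{j+1}, we have ŝ_j ŝ_{j+1} = s_j s_{j+1}. -/

import Mathlib

open Matrix

/-- A core transformation acting on rows/columns 1,2 of `ℂ³`. -/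
def core12 (c : ℂ) (s : ℝ) : Matrix (Fin 3) (Fin 3) ℂ :=
  !![c, -(s : ℂ), 0; (s : ℂ), (starRingEnd ℂ) c, 0; 0, 0, 1]

/-- A core transformation acting on rows/columns 2,3 of `ℂ³`. -/
def core23 (c : ℂ) (s : ℝ) : Matrix (Fin 3) (Fin 3) ℂ :=
  !![1, 0, 0; 0, c, -(s : ℂ); 0, (s : ℂ), (starRingEnd ℂ) c]

/-- Turnover conservation: if `F_j G_{j+1} H_j = M_{j+1} Ĝ_j Ĝ_{j+1}` with all
factors unitary core transformations in the indicated patterns, then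
`ŝ_j ŝ_{j+1} = s_j s_{j+1}`. -/
theorem turnover_conserves_s_product
    (cF cG cH cM cGj cGj1 : ℂ) (sF sG sH sM sGj sGj1 : ℝ)
    (hF : ‖cF‖ ^ 2 + sF ^ 2 = 1)
    (hG : ‖cG‖ ^ 2 + sG ^ 2 = 1)
    (hH : ‖cH‖ ^ 2 + sH ^ 2 = 1)
    (hM : ‖cM‖ ^ 2 + sM ^ 2 = 1)
    (hGj : ‖cGj‖ ^ 2 + sGj ^ 2 = 1)
    (hGj1 : ‖cGj1‖ ^ 2 + sGj1 ^ 2 = 1)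
    (heq : core12 cF sF * core23 cG sG * core12 cH sH =
      core23 cM sM * core12 cGj sGj * core23 cGj1 sGj1) :
    sGj * sGj1 = sF * sG := by
  have h := congrFun (congrFun heq 0) 2
  simp [core12, core23, Matrix.mul_apply, Fin.sum_univ_three] at h
  exact_mod_cast h.symm
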